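/- Let u : ℝ³ → ℝ be C², let δ > 0, let D_δ(x,y,t) = (δx, δy, δ²t), and define u′ = u ∘ D_{1/δ}. If p ∈ ℝ³ satisfies ‖∇_H u(p)‖ ≠ 0, then ‖∇_H u′(D_δ(p))‖ ≠ 0 and the horizontal Gauss curvatures satisfy K_{u′}(D_δ(p)) = (1/δ²) K_u(p). -/

import Mathlib

/-- The Heisenberg vector field `X = ∂ₓ + 2y ∂ₜ` applied to `u`. -/
noncomputable def Xd (u : ℝ × ℝ × ℝ → ℝ) (p : ℝ × ℝ × ℝ) : ℝ :=
  fderiv ℝ u p (1, 0, 2 * p.2.1)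

/-- The Heisenberg vector field `Y = ∂_y − 2x ∂ₜ` applied to `u`. -/
noncomputable def Yd (u : ℝ × ℝ × ℝ → ℝ) (p : ℝ × ℝ × ℝ) : ℝ :=
  fderiv ℝ u p (0, 1, -(2 * p.1))

/-- The Reeb vector field `T = ∂ₜ` applied to `u`. -/
noncomputable def Td (u : ℝ × ℝ × ℝ → ℝ) (p : ℝ × ℝ × ℝ) : ℝ :=
  fderiv ℝ u p (0, 0, 1)

/-- The norm of the horizontal gradient `‖∇_H u‖ = √((Xu)² + (Yu)²)`. -/
noncomputable def gradH (u : ℝ × ℝ × ℝ → ℝ) (p : ℝ × ℝ × ℝ) : ℝ :=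
  Real.sqrt ((Xd u p) ^ 2 + (Yd u p) ^ 2)

/-- The horizontal mean curvature `H_u = X(Xu/‖∇_H u‖) + Y(Yu/‖∇_H u‖)`. -/
noncomputable def Hmean (u : ℝ × ℝ × ℝ → ℝ) (p : ℝ × ℝ × ℝ) : ℝ :=
  Xd (fun z => Xd u z / gradH u z) p + Yd (fun z => Yd u z / gradH u z) p

/-- The derivative along `E₁ = −q̄·X + p̄·Y` of a function `v`. -/
noncomputable def E1d (u v : ℝ × ℝ × ℝ → ℝ) (p : ℝ × ℝ × ℝ) : ℝ :=
  -(Yd u p / gradH u p) * Xd v p + (Xd u p / gradH u p) * Yd v p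

/-- The horizontal Gauss curvature `K_u = −4E₁(Tu/‖∇_H u‖) − 16(Tu/‖∇_H u‖)²`. -/
noncomputable def Kgauss (u : ℝ × ℝ × ℝ → ℝ) (p : ℝ × ℝ × ℝ) : ℝ :=
  -4 * E1d u (fun z => Td u z / gradH u z) p - 16 * (Td u p / gradH u p) ^ 2

/-- The symplectic distortion `Q_u = X(Yu/‖∇_H u‖) − Y(Xu/‖∇_H u‖)`. -/
noncomputable def Qdist (u : ℝ × ℝ × ℝ → ℝ) (p : ℝ × ℝ × ℝ) : ℝ :=
  Xd (fun z => Yd u z / gradH u z) p - Yd (fun z => Xd u z / gradH u z) p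

/-- The Heisenberg dilation `D_δ(x,y,t) = (δx, δy, δ²t)`. -/
def Ddil (δ : ℝ) (p : ℝ × ℝ × ℝ) : ℝ × ℝ × ℝ :=
  (δ * p.1, δ * p.2.1, δ ^ 2 * p.2.2)

/-- The Heisenberg dilation as a continuous linear map. -/
noncomputable def DdilL (c : ℝ) : (ℝ × ℝ × ℝ) →L[ℝ] (ℝ × ℝ × ℝ) :=
  (c • ContinuousLinearMap.fst ℝ ℝ (ℝ × ℝ)).prod
    (((c • ContinuousLinearMap.fst ℝ ℝ ℝ).comp (ContinuousLinearMap.snd ℝ ℝ (ℝ × ℝ))).prod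
     (((c ^ 2) • ContinuousLinearMap.snd ℝ ℝ ℝ).comp (ContinuousLinearMap.snd ℝ ℝ (ℝ × ℝ))))

lemma ddilL_eq (c : ℝ) : Ddil c = fun p => DdilL c p := by
  funext p
  simp [DdilL, Ddil, Prod.ext_iff]

lemma ddil_ddil_inv (δ : ℝ) (hδ : δ ≠ 0) (p : ℝ × ℝ × ℝ) :
    Ddil δ⁻¹ (Ddil δ p) = p := by
  simp only [Ddil, Prod.ext_iff]
  refine ⟨?_, ?_, ?_⟩ <;> field_simp

lemma ddil_differentiableAt (c : ℝ) (z : ℝ × ℝ × ℝ) :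
    DifferentiableAt ℝ (Ddil c) z := by
  rw [ddilL_eq]; exact (DdilL c).differentiableAt

lemma fderiv_comp_ddil (c : ℝ) (v : ℝ × ℝ × ℝ → ℝ) (z w : ℝ × ℝ × ℝ)
    (hv : DifferentiableAt ℝ v (Ddil c z)) :
    fderiv ℝ (fun z => v (Ddil c z)) z w = fderiv ℝ v (Ddil c z) (Ddil c w) := by
  have h1 : HasFDerivAt (Ddil c) (DdilL c) z := by
    rw [ddilL_eq]; exact (DdilL c).hasFDerivAt
  have hL : HasFDerivAt (fun z => v (Ddil c z)) ((fderiv ℝ v (Ddil c z)).comp (DdilL c)) z :=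
    hv.hasFDerivAt.comp z h1
  rw [hL.fderiv]
  simp only [ContinuousLinearMap.comp_apply]
  congr 1

lemma Xd_comp (c : ℝ) (v : ℝ × ℝ × ℝ → ℝ) (z : ℝ × ℝ × ℝ)
    (hv : DifferentiableAt ℝ v (Ddil c z)) :
    Xd (fun z => v (Ddil c z)) z = c * Xd v (Ddil c z) := by
  unfold Xd
  rw [fderiv_comp_ddil c v z _ hv]
  have h : Ddil c ((1:ℝ), (0:ℝ), 2 * z.2.1) = c • ((1:ℝ), (0:ℝ), 2 * (Ddil c z).2.1) := by
    simp only [Ddil, Prod.smul_mk, smul_eq_mul, Prod.mk.injEq]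
    refine ⟨by simp, by simp, by ring_nf⟩
  rw [h, map_smul, smul_eq_mul]

lemma Yd_comp (c : ℝ) (v : ℝ × ℝ × ℝ → ℝ) (z : ℝ × ℝ × ℝ)
    (hv : DifferentiableAt ℝ v (Ddil c z)) :
    Yd (fun z => v (Ddil c z)) z = c * Yd v (Ddil c z) := by
  unfold Yd
  rw [fderiv_comp_ddil c v z _ hv]
  have h : Ddil c ((0:ℝ), (1:ℝ), -(2 * z.1)) = c • ((0:ℝ), (1:ℝ), -(2 * (Ddil c z).1)) := by
    simp only [Ddil, Prod.smul_mk, smul_eq_mul, Prod.mk.injEq]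
    refine ⟨by simp, by simp, by ring_nf⟩
  rw [h, map_smul, smul_eq_mul]

lemma Td_comp (c : ℝ) (v : ℝ × ℝ × ℝ → ℝ) (z : ℝ × ℝ × ℝ)
    (hv : DifferentiableAt ℝ v (Ddil c z)) :
    Td (fun z => v (Ddil c z)) z = c ^ 2 * Td v (Ddil c z) := by
  unfold Td
  rw [fderiv_comp_ddil c v z _ hv]
  have h : Ddil c ((0:ℝ), (0:ℝ), (1:ℝ)) = (c ^ 2) • ((0:ℝ), (0:ℝ), (1:ℝ)) := by
    simp only [Ddil, Prod.smul_mk, smul_eq_mul, Prod.mk.injEq]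
    refine ⟨by ring_nf, by ring_nf, by simp⟩
  rw [h, map_smul, smul_eq_mul]

lemma gradH_comp (c : ℝ) (hc : 0 ≤ c) (v : ℝ × ℝ × ℝ → ℝ) (z : ℝ × ℝ × ℝ)
    (hv : DifferentiableAt ℝ v (Ddil c z)) :
    gradH (fun z => v (Ddil c z)) z = c * gradH v (Ddil c z) := by
  unfold gradH
  rw [Xd_comp c v z hv, Yd_comp c v z hv]
  rw [show (c * Xd v (Ddil c z)) ^ 2 + (c * Yd v (Ddil c z)) ^ 2
      = c ^ 2 * ((Xd v (Ddil c z)) ^ 2 + (Yd v (Ddil c z)) ^ 2) by ring]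
  rw [Real.sqrt_mul (sq_nonneg c), Real.sqrt_sq hc]

lemma Xd_const_mul (a : ℝ) (g : ℝ × ℝ × ℝ → ℝ) (z : ℝ × ℝ × ℝ)
    (hg : DifferentiableAt ℝ g z) :
    Xd (fun z => a * g z) z = a * Xd g z := by
  unfold Xd; rw [fderiv_const_mul hg]; simp

lemma Yd_const_mul (a : ℝ) (g : ℝ × ℝ × ℝ → ℝ) (z : ℝ × ℝ × ℝ)
    (hg : DifferentiableAt ℝ g z) :
    Yd (fun z => a * g z) z = a * Yd g z := by
  unfold Yd; rw [fderiv_const_mul hg]; simp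

/-- Horizontal Gauss curvature scales by `1/δ²` under the dilation `D_δ`. -/
theorem kgauss_dilation_scaling (u : ℝ × ℝ × ℝ → ℝ) (hu : ContDiff ℝ 2 u)
    (δ : ℝ) (hδ : 0 < δ) (p : ℝ × ℝ × ℝ) (hp : gradH u p ≠ 0) :
    gradH (fun z => u (Ddil δ⁻¹ z)) (Ddil δ p) ≠ 0 ∧
    Kgauss (fun z => u (Ddil δ⁻¹ z)) (Ddil δ p) = (1 / δ ^ 2) * Kgauss u p := by
  have hδ0 : δ ≠ 0 := ne_of_gt hδ
  have hδi : (0:ℝ) < δ⁻¹ := inv_pos.mpr hδ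
  have hδi0 : (δ:ℝ)⁻¹ ≠ 0 := ne_of_gt hδi
  have hud : Differentiable ℝ u := hu.differentiable (by norm_num)
  have hdu1 : ContDiff ℝ 1 (fderiv ℝ u) := hu.fderiv_right (by norm_num)
  have hfd : Differentiable ℝ (fderiv ℝ u) := hdu1.differentiable (by norm_num)
  -- differentiability of Xd u, Yd u, Td u
  have hXd : ∀ z, DifferentiableAt ℝ (Xd u) z := by
    intro z
    exact (hfd z).clm_apply (by fun_prop)
  have hYd : ∀ z, DifferentiableAt ℝ (Yd u) z := by
    intro z
    exact (hfd z).clm_apply (by fun_prop)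
  have hTd : ∀ z, DifferentiableAt ℝ (Td u) z := by
    intro z
    exact (hfd z).clm_apply (differentiableAt_const _)
  -- the square sum is nonzero at p
  have hs : (Xd u p) ^ 2 + (Yd u p) ^ 2 ≠ 0 := by
    intro h
    exact hp (by simp [gradH, h])
  have hG : DifferentiableAt ℝ (gradH u) p :=
    DifferentiableAt.sqrt (((hXd p).pow 2).add ((hYd p).pow 2)) hs
  -- w := Tu / |∇_H u|
  set w : ℝ × ℝ × ℝ → ℝ := fun z => Td u z / gradH u z with hw_def
  have hw : DifferentiableAt ℝ w p := by
    rw [hw_def]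
    simp only [div_eq_mul_inv]
    exact (hTd p).mul (hG.inv hp)
  set u' : ℝ × ℝ × ℝ → ℝ := fun z => u (Ddil δ⁻¹ z) with hu'_def
  have hpp : Ddil δ⁻¹ (Ddil δ p) = p := ddil_ddil_inv δ hδ0 p
  -- basic transformation at the point Ddil δ p
  have hX : Xd u' (Ddil δ p) = δ⁻¹ * Xd u p := by
    rw [hu'_def, Xd_comp δ⁻¹ u _ (hud _), hpp]
  have hY : Yd u' (Ddil δ p) = δ⁻¹ * Yd u p := by
    rw [hu'_def, Yd_comp δ⁻¹ u _ (hud _), hpp]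
  have hT : Td u' (Ddil δ p) = δ⁻¹ ^ 2 * Td u p := by
    rw [hu'_def, Td_comp δ⁻¹ u _ (hud _), hpp]
  have hGr : gradH u' (Ddil δ p) = δ⁻¹ * gradH u p := by
    rw [hu'_def, gradH_comp δ⁻¹ (le_of_lt hδi) u _ (hud _), hpp]
  have hG0 : gradH u' (Ddil δ p) ≠ 0 := by
    rw [hGr]; exact mul_ne_zero hδi0 hp
  refine ⟨hG0, ?_⟩
  -- global identity for the quotient function
  have hw' : (fun z => Td u' z / gradH u' z) = fun z => δ⁻¹ * w (Ddil δ⁻¹ z) := by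
    funext z
    rw [hu'_def]
    rw [Td_comp δ⁻¹ u z (hud _), gradH_comp δ⁻¹ (le_of_lt hδi) u z (hud _)]
    rw [hw_def]
    rw [show (δ⁻¹ : ℝ) ^ 2 * Td u (Ddil δ⁻¹ z) = δ⁻¹ * (δ⁻¹ * Td u (Ddil δ⁻¹ z)) by ring,
      mul_div_assoc, mul_div_mul_left _ _ hδi0]
  -- differentiability of w ∘ Ddil δ⁻¹ at Ddil δ p
  have hwD : DifferentiableAt ℝ (fun z => w (Ddil δ⁻¹ z)) (Ddil δ p) := by
    have := DifferentiableAt.comp (Ddil δ p)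
      (by rw [hpp]; exact hw) (ddil_differentiableAt δ⁻¹ (Ddil δ p))
    exact this
  -- derivatives of the quotient function transform with δ⁻²
  have hXw : Xd (fun z => Td u' z / gradH u' z) (Ddil δ p) = δ⁻¹ ^ 2 * Xd w p := by
    rw [hw', Xd_const_mul _ _ _ hwD, Xd_comp δ⁻¹ w _ (by rw [hpp]; exact hw), hpp]
    ring
  have hYw : Yd (fun z => Td u' z / gradH u' z) (Ddil δ p) = δ⁻¹ ^ 2 * Yd w p := by
    rw [hw', Yd_const_mul _ _ _ hwD, Yd_comp δ⁻¹ w _ (by rw [hpp]; exact hw), hpp]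
    ring
  -- put things together
  unfold Kgauss E1d
  rw [hX, hY, hT, hGr, hXw, hYw]
  have e1 : δ⁻¹ * Yd u p / (δ⁻¹ * gradH u p) = Yd u p / gradH u p := by
    rw [mul_div_mul_left _ _ hδi0]
  have e2 : δ⁻¹ * Xd u p / (δ⁻¹ * gradH u p) = Xd u p / gradH u p := by
    rw [mul_div_mul_left _ _ hδi0]
  have e3 : δ⁻¹ ^ 2 * Td u p / (δ⁻¹ * gradH u p) = δ⁻¹ * (Td u p / gradH u p) := by
    rw [show (δ⁻¹ : ℝ) ^ 2 * Td u p = δ⁻¹ * (δ⁻¹ * Td u p) by ring,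
      mul_div_assoc, mul_div_mul_left _ _ hδi0]
  rw [e1, e2, e3]
  have : Xd (fun z => Td u z / gradH u z) p = Xd w p := by rw [hw_def]
  rw [this]
  have : Yd (fun z => Td u z / gradH u z) p = Yd w p := by rw [hw_def]
  rw [this]
  field_simp
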